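/- arXiv:2603.21239 — 3 statements merged into one kernel-verified Lean document; each statement's English description precedes it below -/
import Mathlib

section
/- Let F be a finite field with q elements, n ≥ 1, and R = M_n(F); assume det(-I_n) = 1 (i.e., char F = 2 or n is even). Let S ⊆ R with 0 ∉ S and u s v ∈ S for all u, v ∈ SL_n(F) and s ∈ S. Then the adjacency matrix over ℂ of the Cayley graph Γ(R,S) has at most n + q - 1 distinct eigenvalues; that is, the set of complex numbers λ lying in the spectrum of the adjacency matrix has cardinality at most n + q - 1. -/
open scoped Classical

noncomputable def rep17 (F : Type*) [Field F] (n : ℕ) : (Fin n ⊕ Fˣ) → Matrix (Fin n) (Fin n) F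
  | .inl r => Matrix.diagonal (fun i => if (i : ℕ) < (r : ℕ) then 1 else 0)
  | .inr d => Matrix.diagonal (fun i => if (i : ℕ) = 0 then (d : F) else 1)

-- symm of SL-equivalence
lemma sleq_symm {F : Type*} [Field F] {n : ℕ} {c d a b : Matrix (Fin n) (Fin n) F}
    (ha : a.det = 1) (hb : b.det = 1) (h : c = a * d * b) :
    ∃ a' b' : Matrix (Fin n) (Fin n) F, a'.det = 1 ∧ b'.det = 1 ∧ d = a' * c * b' := by
  have hau : IsUnit a.det := by rw [ha]; exact isUnit_one
  have hbu : IsUnit b.det := by rw [hb]; exact isUnit_one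
  refine ⟨a⁻¹, b⁻¹, ?_, ?_, ?_⟩
  · rw [Matrix.det_nonsing_inv, ha, Ring.inverse_one]
  · rw [Matrix.det_nonsing_inv, hb, Ring.inverse_one]
  · rw [h]; symm
    calc a⁻¹ * (a * d * b) * b⁻¹ = (a⁻¹ * a) * d * (b * b⁻¹) := by
          simp only [Matrix.mul_assoc]
      _ = d := by rw [Matrix.nonsing_inv_mul _ hau, Matrix.mul_nonsing_inv _ hbu,
          Matrix.one_mul, Matrix.mul_one]

lemma perm_of_card_eq {α : Type*} [Fintype α] (p q : α → Prop)
    [DecidablePred p] [DecidablePred q]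
    (h : Fintype.card {x // p x} = Fintype.card {x // q x}) :
    ∃ σ : Equiv.Perm α, ∀ i, q (σ i) ↔ p i := by
  have h' : Fintype.card {x // ¬p x} = Fintype.card {x // ¬q x} := by
    rw [Fintype.card_subtype_compl, Fintype.card_subtype_compl, h]
  let e := Fintype.equivOfCardEq h
  let f := Fintype.equivOfCardEq h'
  refine ⟨Equiv.subtypeCongr e f, fun i => ?_⟩
  by_cases hi : p i
  · simp only [Equiv.subtypeCongr, Equiv.trans_apply,
      Equiv.sumCompl_symm_apply_of_pos hi, Equiv.sumCongr_apply, Sum.map_inl,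
      Equiv.sumCompl_apply_inl]
    exact iff_of_true (e ⟨i, hi⟩).2 hi
  · simp only [Equiv.subtypeCongr, Equiv.trans_apply,
      Equiv.sumCompl_symm_apply_of_neg hi, Equiv.sumCongr_apply, Sum.map_inr,
      Equiv.sumCompl_apply_inr]
    exact iff_of_false (f ⟨i, hi⟩).2 hi

lemma card_val_lt {n j : ℕ} (hj : j ≤ n) :
    Fintype.card {i : Fin n // (i : ℕ) < j} = j := by
  have e : {i : Fin n // (i : ℕ) < j} ≃ Fin j :=
    { toFun := fun x => ⟨x.1, x.2⟩
      invFun := fun x => ⟨⟨x.1, lt_of_lt_of_le x.2 hj⟩, x.2⟩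
      left_inv := fun x => rfl
      right_inv := fun x => rfl }
  rw [Fintype.card_congr e, Fintype.card_fin]

lemma diag_rep {F : Type*} [Field F] [Fintype F] [DecidableEq F] {n : ℕ} (hn : 1 ≤ n) (d : Fin n → F) :
    ∃ (t : Fin n ⊕ Fˣ) (a b : Matrix (Fin n) (Fin n) F),
      a.det = 1 ∧ b.det = 1 ∧ Matrix.diagonal d = a * rep17 F n t * b := by
  by_cases hall : ∀ i, d i ≠ 0
  · -- invertible case
    have hprod : (∏ i, d i) ≠ 0 := Finset.prod_ne_zero_iff.2 fun i _ => hall i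
    set u : Fˣ := Units.mk0 _ hprod with hu
    set e : Fin n → F := fun i => if (i : ℕ) = 0 then (u : F) else 1 with he
    have hene : ∀ i, e i ≠ 0 := by
      intro i; rw [he]; dsimp only; split
      · exact u.ne_zero
      · exact one_ne_zero
    haveI : NeZero n := ⟨by omega⟩
    have hprode : ∏ i, e i = (u : F) := by
      rw [he]
      have : ∀ i : Fin n, (if (i : ℕ) = 0 then (u : F) else 1)
          = (if i = 0 then (u : F) else 1) := by
        intro i; congr 1; exact propext ⟨fun h => Fin.ext (by simpa using h), fun h => by subst h; simp⟩
      simp only [this]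
      rw [Finset.prod_ite_eq' Finset.univ (0 : Fin n) (fun _ => (u : F))]
      simp
    refine ⟨Sum.inr u, Matrix.diagonal (fun i => d i * (e i)⁻¹), 1, ?_, Matrix.det_one, ?_⟩
    · rw [Matrix.det_diagonal, Finset.prod_mul_distrib]
      rw [Finset.prod_inv_distrib, hprode]
      field_simp [hu]
      rw [hu, Units.val_mk0, div_self hprod]
    · rw [Matrix.mul_one, rep17, ← he, Matrix.diagonal_mul_diagonal]
      refine congrArg Matrix.diagonal (funext fun i => ?_)
      exact (by rw [mul_assoc, inv_mul_cancel₀ (hene i), mul_one] :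
        d i * (e i)⁻¹ * e i = d i).symm
  · push_neg at hall
    obtain ⟨i₀, hi₀⟩ := hall
    set j := (Finset.univ.filter fun i => d i ≠ 0).card with hj
    have hjlt : j < n := by
      have hss : (Finset.univ.filter fun i => d i ≠ 0) ⊂ Finset.univ := by
        rw [Finset.ssubset_iff_of_subset (Finset.filter_subset _ _)]
        exact ⟨i₀, Finset.mem_univ _, by simp [hi₀]⟩
      simpa using Finset.card_lt_card hss
    have cardeq : Fintype.card {i : Fin n // (i : ℕ) < j}
        = Fintype.card {i : Fin n // d i ≠ 0} := by
      rw [card_val_lt hjlt.le, Fintype.card_subtype]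
    obtain ⟨σ, hσ⟩ := perm_of_card_eq _ _ cardeq
    set sg : F := ((Equiv.Perm.sign σ : ℤ) : F) with hsgdef
    have hsg : sg * sg = 1 := by
      rcases Int.units_eq_one_or (Equiv.Perm.sign σ) with h | h <;> simp [hsgdef, h]
    have hsgne : sg ≠ 0 := by
      rcases Int.units_eq_one_or (Equiv.Perm.sign σ) with h | h <;> simp [hsgdef, h]
    set iz := σ.symm i₀ with hizdef
    have hiz : d (σ iz) = 0 := by simp [hizdef, hi₀]
    set g₀ : Fin n → F := fun i => if d (σ i) ≠ 0 then (d (σ i))⁻¹ else 1 with hg₀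
    set P0 := ∏ i ∈ Finset.univ.erase iz, g₀ i with hP0def
    have hP0 : P0 ≠ 0 := by
      rw [hP0def]
      refine Finset.prod_ne_zero_iff.2 fun i _ => ?_
      rw [hg₀]; dsimp only; split
      · exact inv_ne_zero (by assumption)
      · exact one_ne_zero
    set g : Fin n → F := Function.update g₀ iz ((sg * P0)⁻¹) with hg
    have hprodg : ∏ i, g i = sg⁻¹ := by
      rw [← Finset.mul_prod_erase Finset.univ g (Finset.mem_univ iz)]
      have h1 : ∏ i ∈ Finset.univ.erase iz, g i = P0 := by
        rw [hP0def]
        exact Finset.prod_congr rfl fun i hi => by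
          rw [hg, Function.update_of_ne (Finset.ne_of_mem_erase hi)]
      rw [h1, hg, Function.update_self, mul_inv, mul_assoc, inv_mul_cancel₀ hP0, mul_one]
    set h : Fin n → F := fun i => if i = i₀ then sg else 1 with hh
    have hprodh : ∏ i, h i = sg := by
      rw [hh, Finset.prod_ite_eq' Finset.univ i₀ (fun _ => sg)]; simp
    set Pσ : Matrix (Fin n) (Fin n) F := σ.toPEquiv.toMatrix with hPσ
    set Pτ : Matrix (Fin n) (Fin n) F := σ.symm.toPEquiv.toMatrix with hPτ
    have hdetPσ : Pσ.det = sg := by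
      rw [hPσ]; rw [show σ.toPEquiv.toMatrix = σ.permMatrix F from rfl,
        Matrix.det_permutation]
    have hdetPτ : Pτ.det = sg := by
      rw [hPτ]; rw [show (Equiv.symm σ).toPEquiv.toMatrix
          = (σ⁻¹ : Equiv.Perm (Fin n)).permMatrix F from rfl,
        Matrix.det_permutation, Equiv.Perm.sign_inv]
    set u := Matrix.diagonal g * Pσ with hudef
    set v := Matrix.diagonal h * Pτ with hvdef
    have hdetu : u.det = 1 := by
      rw [hudef, Matrix.det_mul, Matrix.det_diagonal, hprodg, hdetPσ,
        inv_mul_cancel₀ hsgne]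
    have hdetv : v.det = 1 := by
      rw [hvdef, Matrix.det_mul, Matrix.det_diagonal, hprodh, hdetPτ, hsg]
    have hdh : Matrix.diagonal d * Matrix.diagonal h = Matrix.diagonal d := by
      rw [Matrix.diagonal_mul_diagonal]
      refine congrArg Matrix.diagonal (funext fun i => ?_)
      simp only [hh]
      by_cases hii : i = i₀
      · rw [if_pos hii, hii, hi₀, zero_mul]
      · rw [if_neg hii, mul_one]
    have key : rep17 F n (Sum.inl ⟨j, hjlt⟩) = u * Matrix.diagonal d * v := by
      have e1 : Matrix.diagonal d * Pτ = (Matrix.diagonal d).submatrix id σ := by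
        rw [hPτ, PEquiv.mul_toMatrix_toPEquiv]; simp
      have e2 : Pσ * ((Matrix.diagonal d).submatrix id σ)
          = Matrix.diagonal (d ∘ σ) := by
        rw [hPσ, PEquiv.toMatrix_toPEquiv_mul, Matrix.submatrix_submatrix]
        simpa using Matrix.submatrix_diagonal d σ σ.injective
      have main : (Matrix.diagonal g * Pσ) * Matrix.diagonal d * (Matrix.diagonal h * Pτ)
          = Matrix.diagonal g * Matrix.diagonal (d ∘ σ) := by
        have assoc : (Matrix.diagonal g * Pσ) * Matrix.diagonal d * (Matrix.diagonal h * Pτ)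
            = Matrix.diagonal g * (Pσ * ((Matrix.diagonal d * Matrix.diagonal h) * Pτ)) := by
          simp only [Matrix.mul_assoc]
        rw [assoc, hdh, e1, e2]
      have ptw : rep17 F n (Sum.inl ⟨j, hjlt⟩)
          = Matrix.diagonal g * Matrix.diagonal (d ∘ σ) := by
        rw [Matrix.diagonal_mul_diagonal, rep17]
        refine congrArg Matrix.diagonal (funext fun i => ?_)
        show (if (i : ℕ) < j then (1 : F) else 0) = g i * (d ∘ σ) i
        by_cases hdi : d (σ i) ≠ 0
        · have hij : (i : ℕ) < j := (hσ i).1 hdi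
          have hine : i ≠ iz := by
            intro hcon; rw [hcon] at hdi; exact hdi hiz
          rw [if_pos hij, hg, Function.update_of_ne hine, hg₀]
          dsimp only [Function.comp]
          rw [if_pos hdi, inv_mul_cancel₀ hdi]
        · push_neg at hdi
          have hij : ¬ (i : ℕ) < j := fun hc => ((hσ i).2 hc) hdi
          rw [if_neg hij]
          dsimp only [Function.comp]
          rw [hdi, mul_zero]
      rw [ptw, hudef, hvdef]
      exact main.symm
    obtain ⟨a', b', ha', hb', hab⟩ := sleq_symm hdetu hdetv key
    exact ⟨Sum.inl ⟨j, hjlt⟩, a', b', ha', hb', hab⟩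

lemma exists_rep {F : Type*} [Field F] [Fintype F] [DecidableEq F] {n : ℕ} (hn : 1 ≤ n)
    (c : Matrix (Fin n) (Fin n) F) :
    ∃ (t : Fin n ⊕ Fˣ) (a b : Matrix (Fin n) (Fin n) F),
      a.det = 1 ∧ b.det = 1 ∧ c = a * rep17 F n t * b := by
  obtain ⟨L, L', D, hLD⟩ := Matrix.Pivot.exists_list_transvec_mul_diagonal_mul_list_transvec c
  obtain ⟨t, a, b, ha, hb, hd⟩ := diag_rep hn D
  refine ⟨t, (L.map Matrix.TransvectionStruct.toMatrix).prod * a,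
    b * (L'.map Matrix.TransvectionStruct.toMatrix).prod, ?_, ?_, ?_⟩
  · rw [Matrix.det_mul, Matrix.TransvectionStruct.det_toMatrix_prod, ha, one_mul]
  · rw [Matrix.det_mul, Matrix.TransvectionStruct.det_toMatrix_prod, hb, mul_one]
  · rw [hLD, hd]
    simp only [Matrix.mul_assoc]

-- trace pairing helper
lemma trace_mul_stdBasis {F : Type*} [Field F] {n : ℕ} (M : Matrix (Fin n) (Fin n) F)
    (i j : Fin n) (r : F) :
    (M * Matrix.single j i r).trace = M i j * r := by
  classical
  have h : ∀ k, (M * Matrix.single j i r) k k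
      = if i = k then M k j * r else 0 := by
    intro k
    simp [Matrix.mul_apply, Matrix.single, Matrix.of_apply, ite_and,
      Finset.sum_ite_eq, Finset.mem_univ, mul_ite]
  simp [Matrix.trace, Matrix.diag, h]

-- addchar values nonzero
lemma addChar_ne_zero {A : Type*} [AddCommGroup A] (ψ : AddChar A ℂ) (a : A) : ψ a ≠ 0 := by
  have h : ψ a * ψ (-a) = 1 := by
    rw [← AddChar.map_add_eq_mul, add_neg_cancel, AddChar.map_zero_eq_one]
  intro h0
  rw [h0, zero_mul] at h
  exact zero_ne_one h

open scoped Classical in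
theorem stmt17 {F : Type*} [Field F] [Fintype F] {n : ℕ} (hn : 1 ≤ n)
    (hdet : (-1 : Matrix (Fin n) (Fin n) F).det = 1)
    (S : Set (Matrix (Fin n) (Fin n) F))
    (h0 : (0 : Matrix (Fin n) (Fin n) F) ∉ S)
    (hstab : ∀ u v : Matrix (Fin n) (Fin n) F, u.det = 1 → v.det = 1 →
      ∀ s ∈ S, u * s * v ∈ S) :
    (spectrum ℂ (Matrix.of fun a b : Matrix (Fin n) (Fin n) F =>
        if a - b ∈ S then (1 : ℂ) else 0)).ncard ≤ n + Fintype.card F - 1 := by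
  classical
  set A : Matrix (Matrix (Fin n) (Fin n) F) (Matrix (Fin n) (Fin n) F) ℂ :=
    Matrix.of (fun a b => if a - b ∈ S then (1 : ℂ) else 0) with hA
  obtain ⟨ψ, hψ⟩ : ∃ ψ : AddChar F ℂ, ψ 1 ≠ 1 := AddChar.exists_apply_ne_zero.2 one_ne_zero
  set Sf : Finset (Matrix (Fin n) (Fin n) F) := (Set.toFinite S).toFinset with hSf
  have hmemSf : ∀ x, x ∈ Sf ↔ x ∈ S := fun x => Set.Finite.mem_toFinset _
  set Φ : Matrix (Fin n) (Fin n) F → AddChar (Matrix (Fin n) (Fin n) F) ℂ :=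
    fun c => ψ.compAddMonoidHom (AddMonoidHom.mk' (fun x => (c * x).trace)
      (fun x y => by show (c * (x + y)).trace = _; rw [mul_add, Matrix.trace_add])) with hΦ
  have hΦ_apply : ∀ c x, Φ c x = ψ ((c * x).trace) := fun c x => rfl
  have hnondeg : ∀ e : Matrix (Fin n) (Fin n) F, e ≠ 0 → ∃ x, (e * x).trace = 1 := by
    intro e he
    have hex : ∃ i j, e i j ≠ 0 := by
      by_contra hcon; push_neg at hcon
      exact he (Matrix.ext fun i j => by rw [hcon i j]; rfl)
    obtain ⟨i, j, hij⟩ := hex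
    exact ⟨Matrix.single j i (e i j)⁻¹,
      by rw [trace_mul_stdBasis, mul_inv_cancel₀ hij]⟩
  have hΦinj : Function.Injective Φ := by
    intro c c' hcc
    by_contra hne
    obtain ⟨x, hx⟩ := hnondeg _ (sub_ne_zero.2 hne)
    have h1 : ψ ((c * x).trace) = ψ ((c' * x).trace) := by
      rw [← hΦ_apply, ← hΦ_apply, hcc]
    have h2 : (c * x).trace = ((c - c') * x).trace + (c' * x).trace := by
      rw [Matrix.sub_mul, Matrix.trace_sub]; ring
    rw [h2, AddChar.map_add_eq_mul] at h1
    have h3 : ψ (((c - c') * x).trace) = 1 :=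
      mul_right_cancel₀ (addChar_ne_zero ψ _) (by rw [h1, one_mul])
    rw [hx] at h3
    exact hψ h3
  have hΦsurj : Function.Surjective Φ :=
    ((Fintype.bijective_iff_injective_and_card Φ).2
      ⟨hΦinj, by rw [AddChar.card_eq]⟩).2
  set Λ : AddChar (Matrix (Fin n) (Fin n) F) ℂ → ℂ := fun χ => ∑ s ∈ Sf, χ (-s) with hΛ
  have heig : ∀ χ : AddChar (Matrix (Fin n) (Fin n) F) ℂ, A.mulVec ⇑χ = Λ χ • ⇑χ := by
    intro χ; funext a
    have step1 : (A.mulVec ⇑χ) a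
        = ∑ b ∈ Finset.univ.filter (fun b => a - b ∈ S), χ b := by
      rw [Matrix.mulVec, dotProduct, Finset.sum_filter]
      refine Finset.sum_congr rfl fun b _ => ?_
      rw [hA, Matrix.of_apply, ite_mul, one_mul, zero_mul]
    have step2 : ∑ b ∈ Finset.univ.filter (fun b => a - b ∈ S), χ b
        = ∑ s ∈ Sf, χ (a - s) := by
      refine Finset.sum_nbij' (fun b => a - b) (fun s => a - s) ?_ ?_ ?_ ?_ ?_
      · intro b hb
        rw [hmemSf]
        exact (Finset.mem_filter.1 hb).2
      · intro s hs
        refine Finset.mem_filter.2 ⟨Finset.mem_univ _, ?_⟩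
        rw [sub_sub_cancel]
        exact (hmemSf s).1 hs
      · intro b _; exact sub_sub_cancel a b
      · intro s _; exact sub_sub_cancel a s
      · intro b _; exact (congrArg (fun z => χ z) (sub_sub_cancel a b)).symm
    have step3 : ∑ s ∈ Sf, χ (a - s) = Λ χ * χ a := by
      rw [hΛ]; dsimp only
      rw [Finset.sum_mul]
      refine Finset.sum_congr rfl fun s _ => ?_
      rw [← AddChar.map_add_eq_mul, neg_add_eq_sub]
    rw [step1, step2, step3, Pi.smul_apply, smul_eq_mul]
  have hinv : ∀ (a b c : Matrix (Fin n) (Fin n) F), a.det = 1 → b.det = 1 →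
      Λ (Φ (a * c * b)) = Λ (Φ c) := by
    intro a b c ha hb
    have hau : IsUnit a.det := by rw [ha]; exact isUnit_one
    have hbu : IsUnit b.det := by rw [hb]; exact isUnit_one
    have hainv : a⁻¹.det = 1 := by rw [Matrix.det_nonsing_inv, ha, Ring.inverse_one]
    have hbinv : b⁻¹.det = 1 := by rw [Matrix.det_nonsing_inv, hb, Ring.inverse_one]
    rw [hΛ]; dsimp only
    refine Finset.sum_nbij' (fun s => b * s * a) (fun s => b⁻¹ * s * a⁻¹) ?_ ?_ ?_ ?_ ?_
    · intro s hs
      rw [hmemSf]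
      exact hstab b a hb ha s ((hmemSf s).1 hs)
    · intro s hs
      rw [hmemSf]
      exact hstab b⁻¹ a⁻¹ hbinv hainv s ((hmemSf s).1 hs)
    · intro s _
      show b⁻¹ * (b * s * a) * a⁻¹ = s
      have : b⁻¹ * (b * s * a) * a⁻¹ = (b⁻¹ * b) * s * (a * a⁻¹) := by
        simp only [Matrix.mul_assoc]
      rw [this, Matrix.nonsing_inv_mul _ hbu, Matrix.mul_nonsing_inv _ hau,
        Matrix.one_mul, Matrix.mul_one]
    · intro s _
      show b * (b⁻¹ * s * a⁻¹) * a = s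
      have : b * (b⁻¹ * s * a⁻¹) * a = (b * b⁻¹) * s * (a⁻¹ * a) := by
        simp only [Matrix.mul_assoc]
      rw [this, Matrix.mul_nonsing_inv _ hbu, Matrix.nonsing_inv_mul _ hau,
        Matrix.one_mul, Matrix.mul_one]
    · intro s _
      show ψ ((a * c * b * -s).trace) = ψ ((c * -(b * s * a)).trace)
      congr 1
      have e1 : a * c * b * -s = a * ((c * (b * -s))) := by
        simp only [Matrix.mul_assoc]
      rw [e1, Matrix.trace_mul_comm]
      have e2 : c * (b * -s) * a = c * (b * -s * a) := by
        simp only [Matrix.mul_assoc]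
      rw [e2]
      congr 1
      rw [Matrix.mul_neg, Matrix.neg_mul]
  set g : (Fin n ⊕ Fˣ) → ℂ := fun t => Λ (Φ (rep17 F n t)) with hgdef
  have hval : ∀ χ, ∃ t, Λ χ = g t := by
    intro χ
    obtain ⟨c, rfl⟩ := hΦsurj χ
    obtain ⟨t, a, b, ha, hb, hc⟩ := exists_rep hn c
    exact ⟨t, by rw [hc, hinv a b _ ha hb, hgdef]⟩
  set f := Matrix.toLinAlgEquiv' A with hf
  have hAf : spectrum ℂ A = spectrum ℂ f := (AlgEquiv.spectrum_eq _ _).symm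
  set p : Polynomial ℂ := ∏ t : (Fin n ⊕ Fˣ), (Polynomial.X - Polynomial.C (g t)) with hp
  have hp0 : Polynomial.aeval f p = 0 := by
    refine Module.Basis.ext (AddChar.complexBasis (Matrix (Fin n) (Fin n) F)) fun χ => ?_
    rw [AddChar.complexBasis_apply]
    have hev : Module.End.HasEigenvector f (Λ χ) ⇑χ := by
      refine ⟨Module.End.mem_eigenspace_iff.2 ?_, ?_⟩
      · rw [hf, Matrix.toLinAlgEquiv'_apply]
        exact heig χ
      · intro hc
        have h00 := congrFun hc 0
        rw [AddChar.map_zero_eq_one, Pi.zero_apply] at h00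
        exact one_ne_zero h00
    rw [Module.End.aeval_apply_of_hasEigenvector hev]
    obtain ⟨t, ht⟩ := hval χ
    have hev0 : Polynomial.eval (Λ χ) p = 0 := by
      rw [hp, Polynomial.eval_prod]
      refine Finset.prod_eq_zero (Finset.mem_univ t) ?_
      rw [Polynomial.eval_sub, Polynomial.eval_X, Polynomial.eval_C, ht, sub_self]
    rw [hev0, zero_smul, LinearMap.zero_apply]
  have hsub : spectrum ℂ A ⊆ Set.range g := by
    intro μ hμ
    rw [hAf] at hμ
    have he : Module.End.HasEigenvalue f μ := Module.End.hasEigenvalue_iff_mem_spectrum.2 hμ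
    have hroot : (minpoly ℂ f).IsRoot μ := Module.End.hasEigenvalue_iff_isRoot.1 he
    obtain ⟨q, hq⟩ := minpoly.dvd ℂ f hp0
    have hpμ : p.eval μ = 0 := by
      rw [hq, Polynomial.eval_mul, hroot.eq_zero, zero_mul]
    rw [hp, Polynomial.eval_prod] at hpμ
    obtain ⟨t, -, ht⟩ := Finset.prod_eq_zero_iff.1 hpμ
    rw [Polynomial.eval_sub, Polynomial.eval_X, Polynomial.eval_C, sub_eq_zero] at ht
    exact ⟨t, ht.symm⟩
  have hcard1 : (spectrum ℂ A).ncard ≤ (Set.range g).ncard :=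
    Set.ncard_le_ncard hsub (Set.finite_range g)
  have hcard2 : (Set.range g).ncard ≤ Fintype.card (Fin n ⊕ Fˣ) := by
    have h1 := Set.ncard_image_le (s := (Set.univ : Set (Fin n ⊕ Fˣ))) (f := g)
      Set.finite_univ
    rw [Set.image_univ, Set.ncard_univ, Nat.card_eq_fintype_card] at h1
    exact h1
  have hcard3 : Fintype.card (Fin n ⊕ Fˣ) = n + (Fintype.card F - 1) := by
    rw [Fintype.card_sum, Fintype.card_fin, Fintype.card_units]
  have hFpos : 1 ≤ Fintype.card F := Fintype.card_pos
  omega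
end

section
/- Let F be a finite field, n ≥ 2, and R = M_n(F). Let S ⊆ R with 0 ∉ S and u s v ∈ S for all u, v ∈ GL_n(F) and s ∈ S. Let A be the adjacency matrix over ℂ of the Cayley graph Γ(R,S). Then Γ(R,S) has no perfect state transfer: for every real number t > 0 and all distinct X, Y ∈ M_n(F), the (X,Y) entry of the matrix exponential exp(i t A) has absolute value strictly less than 1. -/
open scoped Classical

lemma exp_submatrix_equiv {m : Type*} [Fintype m] [DecidableEq m]
    (e : m ≃ m) (B : Matrix m m ℂ) :
    (NormedSpace.exp B).submatrix e e = NormedSpace.exp (B.submatrix e e) := by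
  letI : SeminormedRing (Matrix m m ℂ) := Matrix.linftyOpSemiNormedRing
  letI : NormedRing (Matrix m m ℂ) := Matrix.linftyOpNormedRing
  letI : NormedAlgebra ℂ (Matrix m m ℂ) := Matrix.linftyOpNormedAlgebra
  letI : NormedAlgebra ℚ (Matrix m m ℂ) := Matrix.linftyOpNormedAlgebra
  have hcont : Continuous (Matrix.reindexAlgEquiv ℂ ℂ e.symm) := by
    exact (continuous_id.matrix_reindex (R := ℂ) (X := Matrix m m ℂ) e.symm e.symm)
  have h := NormedSpace.map_exp (Matrix.reindexAlgEquiv ℂ ℂ e.symm) hcont B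
  simp only [Matrix.reindexAlgEquiv_apply, Matrix.reindex_apply, Equiv.symm_symm] at h
  exact h

open scoped Classical in
theorem stmt18 {F : Type*} [Field F] [Fintype F] {n : ℕ} (hn : 2 ≤ n)
    (S : Set (Matrix (Fin n) (Fin n) F))
    (h0 : (0 : Matrix (Fin n) (Fin n) F) ∉ S)
    (hstab : ∀ u v : (Matrix (Fin n) (Fin n) F)ˣ, ∀ s ∈ S,
      (u : Matrix (Fin n) (Fin n) F) * s * (v : Matrix (Fin n) (Fin n) F) ∈ S)
    (A : Matrix (Matrix (Fin n) (Fin n) F) (Matrix (Fin n) (Fin n) F) ℂ)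
    (hA : A = Matrix.of fun a b => if a - b ∈ S then (1 : ℂ) else 0) :
    ∀ t : ℝ, 0 < t → ∀ X Y : Matrix (Fin n) (Fin n) F, X ≠ Y →
      ‖NormedSpace.exp ((Complex.I * (t : ℂ)) • A) X Y‖ < 1 := by
  intro t ht X Y hXY
  set z : ℂ := Complex.I * (t : ℂ) with hz
  set M : Matrix (Matrix (Fin n) (Fin n) F) (Matrix (Fin n) (Fin n) F) ℂ :=
    NormedSpace.exp (z • A) with hM
  -- S is symmetric
  have hneg : ∀ s ∈ S, -s ∈ S := by
    intro s hs
    have := hstab (-1) 1 s hs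
    simpa using this
  have hsymm : ∀ a b : Matrix (Fin n) (Fin n) F, A a b = A b a := by
    intro a b
    rw [hA]
    simp only [Matrix.of_apply]
    by_cases h : a - b ∈ S
    · rw [if_pos h, if_pos (by simpa using hneg _ h)]
    · rw [if_neg h, if_neg (fun h' => h (by simpa using hneg _ h'))]
  have hreal : ∀ a b : Matrix (Fin n) (Fin n) F, (star (A a b) : ℂ) = A a b := by
    intro a b
    rw [hA]
    simp only [Matrix.of_apply]
    split_ifs <;> simp
  -- Hermitian conjugate
  have hH : Matrix.conjTranspose (z • A) = (-z) • A := by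
    ext a b
    simp only [Matrix.conjTranspose_apply, Matrix.smul_apply, smul_eq_mul, star_mul',
      Matrix.neg_apply]
    rw [hsymm b a, hreal a b]
    have hstz : star z = -z := by
      rw [hz]
      simp [Complex.conj_I, mul_comm]
    rw [hstz]
  -- unitarity
  have hcomm : Commute (z • A) ((-z) • A) := ((Commute.refl A).smul_left z).smul_right (-z)
  have hunit : M * Matrix.conjTranspose M = 1 := by
    rw [hM, ← Matrix.exp_conjTranspose, hH, ← Matrix.exp_add_of_commute _ _ hcomm]
    rw [← add_smul, add_neg_cancel, zero_smul, NormedSpace.exp_zero]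
  -- row sums of squared abs
  have hrow : ∀ Z : Matrix (Fin n) (Fin n) F,
      ∑ W : Matrix (Fin n) (Fin n) F, Complex.normSq (M Z W) = 1 := by
    intro Z
    have h1 : (M * Matrix.conjTranspose M) Z Z = 1 := by rw [hunit]; simp
    rw [Matrix.mul_apply] at h1
    have h2 : ∑ W : Matrix (Fin n) (Fin n) F, ((Complex.normSq (M Z W) : ℂ)) = 1 := by
      rw [← h1]
      refine Finset.sum_congr rfl fun W _ => ?_
      rw [Matrix.conjTranspose_apply, Complex.star_def, Complex.mul_conj]
    have := congrArg Complex.re h2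
    simpa using this
  -- invariance under graph automorphisms
  have hinv : ∀ e : Matrix (Fin n) (Fin n) F ≃ Matrix (Fin n) (Fin n) F,
      (∀ a b, A (e a) (e b) = A a b) → ∀ a b, M (e a) (e b) = M a b := by
    intro e he a b
    have h1 : (z • A).submatrix e e = z • A := by
      ext a b
      simp [Matrix.submatrix_apply, he a b]
    have h2 : M.submatrix e e = M := by
      rw [hM, exp_submatrix_equiv, h1]
    calc M (e a) (e b) = (M.submatrix e e) a b := rfl
      _ = M a b := by rw [h2]
  -- translations are automorphisms
  have htrans : ∀ c a b : Matrix (Fin n) (Fin n) F, M (a + c) (b + c) = M a b := by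
    intro c a b
    refine hinv (Equiv.addRight c) ?_ a b
    intro a b
    rw [hA]
    simp only [Matrix.of_apply, Equiv.coe_addRight]
    have h3 : a + c - (b + c) = a - b := by abel
    rw [h3]
  -- unit multiplications are automorphisms
  have hmul : ∀ u v : (Matrix (Fin n) (Fin n) F)ˣ, ∀ a b : Matrix (Fin n) (Fin n) F,
      M ((u : Matrix (Fin n) (Fin n) F) * a * v) ((u : Matrix (Fin n) (Fin n) F) * b * v)
        = M a b := by
    intro u v a b
    refine hinv
      { toFun := fun W => (u : Matrix (Fin n) (Fin n) F) * W * (v : Matrix (Fin n) (Fin n) F)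
        invFun := fun W => ((u⁻¹ : _ˣ) : Matrix (Fin n) (Fin n) F) * W *
          ((v⁻¹ : _ˣ) : Matrix (Fin n) (Fin n) F)
        left_inv := fun W => by
          show ((u⁻¹ : _ˣ) : Matrix (Fin n) (Fin n) F) *
              ((u : Matrix (Fin n) (Fin n) F) * W * v) *
              ((v⁻¹ : _ˣ) : Matrix (Fin n) (Fin n) F) = W
          have hre : ((u⁻¹ : _ˣ) : Matrix (Fin n) (Fin n) F) *
              ((u : Matrix (Fin n) (Fin n) F) * W * v) * ((v⁻¹ : _ˣ) : Matrix (Fin n) (Fin n) F)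
              = (((u⁻¹ : _ˣ) : Matrix (Fin n) (Fin n) F) * u) * W *
                ((v : Matrix (Fin n) (Fin n) F) * ((v⁻¹ : _ˣ) : Matrix (Fin n) (Fin n) F)) := by
            noncomm_ring
          rw [hre, Units.inv_mul, Units.mul_inv, one_mul, mul_one]
        right_inv := fun W => by
          show (u : Matrix (Fin n) (Fin n) F) *
              (((u⁻¹ : _ˣ) : Matrix (Fin n) (Fin n) F) * W *
                ((v⁻¹ : _ˣ) : Matrix (Fin n) (Fin n) F)) *
              (v : Matrix (Fin n) (Fin n) F) = W
          have hre : (u : Matrix (Fin n) (Fin n) F) *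
              (((u⁻¹ : _ˣ) : Matrix (Fin n) (Fin n) F) * W * ((v⁻¹ : _ˣ) : Matrix (Fin n) (Fin n) F)) *
              (v : Matrix (Fin n) (Fin n) F)
              = ((u : Matrix (Fin n) (Fin n) F) * ((u⁻¹ : _ˣ) : Matrix (Fin n) (Fin n) F)) * W *
                (((v⁻¹ : _ˣ) : Matrix (Fin n) (Fin n) F) * (v : Matrix (Fin n) (Fin n) F)) := by
            noncomm_ring
          rw [hre, Units.mul_inv, Units.inv_mul, one_mul, mul_one] } ?_ a b
    intro a b
    rw [hA]
    simp only [Matrix.of_apply, Equiv.coe_fn_mk]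
    have h4 : (u : Matrix (Fin n) (Fin n) F) * a * v - (u : Matrix (Fin n) (Fin n) F) * b * v
        = (u : Matrix (Fin n) (Fin n) F) * (a - b) * v := by noncomm_ring
    rw [h4]
    have h5 : (u : Matrix (Fin n) (Fin n) F) * (a - b) * v ∈ S ↔ a - b ∈ S := by
      constructor
      · intro h
        have h6 := hstab u⁻¹ v⁻¹ _ h
        have hre : ((u⁻¹ : _ˣ) : Matrix (Fin n) (Fin n) F) *
            ((u : Matrix (Fin n) (Fin n) F) * (a - b) * v) *
            ((v⁻¹ : _ˣ) : Matrix (Fin n) (Fin n) F)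
            = (((u⁻¹ : _ˣ) : Matrix (Fin n) (Fin n) F) * u) * (a - b) *
              ((v : Matrix (Fin n) (Fin n) F) * ((v⁻¹ : _ˣ) : Matrix (Fin n) (Fin n) F)) := by
          noncomm_ring
        rw [hre, Units.inv_mul, Units.mul_inv, one_mul, mul_one] at h6
        exact h6
      · exact hstab u v _
    by_cases h : a - b ∈ S
    · rw [if_pos (h5.mpr h), if_pos h]
    · rw [if_neg (fun h' => h (h5.mp h')), if_neg h]
  -- the key inequality
  have key : Complex.normSq (M X Y) < 1 := by
    rcases lt_or_ge (Complex.normSq (M X Y)) 1 with h | h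
    · exact h
    exfalso
    have hle : Complex.normSq (M X Y) ≤ 1 := by
      rw [← hrow X]
      exact Finset.single_le_sum (fun W _ => Complex.normSq_nonneg _) (Finset.mem_univ Y)
    have heq : Complex.normSq (M X Y) = 1 := le_antisymm hle h
    -- all other entries in row X vanish
    have hzero : ∀ W, W ≠ Y → M X W = 0 := by
      intro W hW
      have hsum := hrow X
      rw [← Finset.add_sum_erase _ _ (Finset.mem_univ Y), heq] at hsum
      have h6 : ∑ W' ∈ Finset.univ.erase Y, Complex.normSq (M X W') = 0 := by linarith
      have h7 := (Finset.sum_eq_zero_iff_of_nonneg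
        (fun W' _ => Complex.normSq_nonneg (M X W'))).mp h6 W (by simp [hW])
      exact Complex.normSq_eq_zero.mp h7
    have hMXY : M X Y ≠ 0 := by
      intro h'
      rw [h', Complex.normSq_zero] at heq
      norm_num at heq
    -- invariance forces u d v = d
    have hfix : ∀ u v : (Matrix (Fin n) (Fin n) F)ˣ,
        (u : Matrix (Fin n) (Fin n) F) * (X - Y) * v = X - Y := by
      intro u v
      set c : Matrix (Fin n) (Fin n) F := X - (u : Matrix (Fin n) (Fin n) F) * X * v with hc
      have h8 : M X ((u : Matrix (Fin n) (Fin n) F) * Y * v + c) = M X Y := by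
        have := htrans c ((u : Matrix (Fin n) (Fin n) F) * X * v)
          ((u : Matrix (Fin n) (Fin n) F) * Y * v)
        rw [hc] at this ⊢
        have h9 : (u : Matrix (Fin n) (Fin n) F) * X * v +
            (X - (u : Matrix (Fin n) (Fin n) F) * X * v) = X := by abel
        rw [h9] at this
        rw [this, hmul]
      have h10 : (u : Matrix (Fin n) (Fin n) F) * Y * v + c = Y := by
        by_contra h'
        rw [hzero _ h'] at h8
        exact hMXY h8.symm
      rw [hc] at h10
      have h10' : (u : Matrix (Fin n) (Fin n) F) * Y * v +
          (X - (u : Matrix (Fin n) (Fin n) F) * X * v) - Y = 0 := sub_eq_zero.mpr h10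
      have h11 : (u : Matrix (Fin n) (Fin n) F) * X * v - (u : Matrix (Fin n) (Fin n) F) * Y * v
          = X - Y := by
        have hid : (u : Matrix (Fin n) (Fin n) F) * X * v -
            (u : Matrix (Fin n) (Fin n) F) * Y * v - (X - Y)
            = -((u : Matrix (Fin n) (Fin n) F) * Y * v +
              (X - (u : Matrix (Fin n) (Fin n) F) * X * v) - Y) := by abel
        exact sub_eq_zero.mp (hid.trans (by rw [h10', neg_zero]))
      calc (u : Matrix (Fin n) (Fin n) F) * (X - Y) * v
          = (u : Matrix (Fin n) (Fin n) F) * X * v -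
            (u : Matrix (Fin n) (Fin n) F) * Y * v := by noncomm_ring
        _ = X - Y := h11
    -- now derive X - Y = 0 using transvection units
    have hd : X - Y = 0 := by
      ext j b
      have : Nontrivial (Fin n) := Fin.nontrivial_iff_two_le.mpr hn
      obtain ⟨i, hij⟩ := exists_ne j
      set E : Matrix (Fin n) (Fin n) F := Matrix.single i j 1 with hE
      have hEE : E * E = 0 := by
        rw [hE]
        exact Matrix.single_mul_single_of_ne (c := 1) i j i (Ne.symm hij) 1
      have hu1 : (1 + E) * (1 - E) = 1 := by
        have h : (1 + E) * (1 - E) = 1 - E * E := by noncomm_ring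
        rw [h, hEE, sub_zero]
      have hu2 : (1 - E) * (1 + E) = 1 := by
        have h : (1 - E) * (1 + E) = 1 - E * E := by noncomm_ring
        rw [h, hEE, sub_zero]
      have hfix1 : (1 + E) * (X - Y) * 1 = X - Y := hfix ⟨1 + E, 1 - E, hu1, hu2⟩ 1
      rw [mul_one] at hfix1
      have hEd : E * (X - Y) = 0 := by
        have h11 : (1 + E) * (X - Y) = (X - Y) + E * (X - Y) := by noncomm_ring
        rw [h11] at hfix1
        exact add_left_cancel (hfix1.trans (add_zero (X - Y)).symm)
      have h12 := congrFun (congrFun hEd i) b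
      rw [hE, Matrix.single_mul_apply_same, one_mul] at h12
      simpa using h12
    exact hXY (by rwa [sub_eq_zero] at hd)
  have habs := Complex.sq_norm (M X Y)
  nlinarith [norm_nonneg (M X Y), key, habs]
end

section
/- Let F be a finite field, n ≥ 2, and R = M_n(F); assume det(-I_n) = 1 (i.e., char F = 2 or n is even). Let S ⊆ R with 0 ∉ S and u s v ∈ S for all u, v ∈ SL_n(F) and s ∈ S. Let A be the adjacency matrix over ℂ of the Cayley graph Γ(R,S). Then Γ(R,S) has no perfect state transfer: for every real number t > 0 and all distinct X, Y ∈ M_n(F), the (X,Y) entry of the matrix exponential exp(i t A) has absolute value strictly less than 1. -/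
open scoped Matrix

/-- exp commutes with reindexing by an equivalence. -/
lemma exp_reindex_aux {m : Type*} [Fintype m] [DecidableEq m] (e : m ≃ m)
    (M : Matrix m m ℂ) :
    Matrix.reindexAlgEquiv ℂ ℂ e (NormedSpace.exp M) =
      NormedSpace.exp (Matrix.reindexAlgEquiv ℂ ℂ e M) := by
  have hcont : Continuous (⇑(Matrix.reindexAlgEquiv ℂ ℂ e)) := by
    apply continuous_pi; intro i; apply continuous_pi; intro j
    exact (continuous_apply (e.symm j)).comp (continuous_apply (e.symm i))
  letI : SeminormedRing (Matrix m m ℂ) := Matrix.linftyOpSemiNormedRing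
  letI : NormedRing (Matrix m m ℂ) := Matrix.linftyOpNormedRing
  letI : NormedAlgebra ℂ (Matrix m m ℂ) := Matrix.linftyOpNormedAlgebra
  letI : NormedAlgebra ℚ (Matrix m m ℂ) := Matrix.linftyOpNormedAlgebra
  exact NormedSpace.map_exp (Matrix.reindexAlgEquiv ℂ ℂ e) hcont M

lemma exists_transvection_move {F : Type*} [Field F] {n : ℕ} (hn : 2 ≤ n)
    (M : Matrix (Fin n) (Fin n) F) (hM : M ≠ 0) :
    ∃ u : Matrix (Fin n) (Fin n) F, u.det = 1 ∧ u * M ≠ M := by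
  have hex : ∃ i j, M i j ≠ 0 := by
    by_contra h
    push_neg at h
    apply hM
    ext i j
    simpa using h i j
  obtain ⟨i, j, hij⟩ := hex
  have hcard : 1 < Fintype.card (Fin n) := by rw [Fintype.card_fin]; omega
  obtain ⟨l, hl⟩ := Fintype.exists_ne_of_one_lt_card hcard i
  refine ⟨Matrix.transvection l i 1, Matrix.det_transvection_of_ne l i hl 1, ?_⟩
  intro h
  have h2 := congrFun (congrFun h l) j
  rw [Matrix.transvection_mul_apply_same, one_mul] at h2
  exact hij (by rwa [add_eq_left] at h2)

open scoped Classical in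
theorem stmt19 {F : Type*} [Field F] [Fintype F] {n : ℕ} (hn : 2 ≤ n)
    (hdet : (-1 : Matrix (Fin n) (Fin n) F).det = 1)
    (S : Set (Matrix (Fin n) (Fin n) F))
    (h0 : (0 : Matrix (Fin n) (Fin n) F) ∉ S)
    (hstab : ∀ u v : Matrix (Fin n) (Fin n) F, u.det = 1 → v.det = 1 →
      ∀ s ∈ S, u * s * v ∈ S)
    (A : Matrix (Matrix (Fin n) (Fin n) F) (Matrix (Fin n) (Fin n) F) ℂ)
    (hA : A = Matrix.of fun a b => if a - b ∈ S then (1 : ℂ) else 0) :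
    ∀ t : ℝ, 0 < t → ∀ X Y : Matrix (Fin n) (Fin n) F, X ≠ Y →
      ‖NormedSpace.exp ((Complex.I * (t : ℂ)) • A) X Y‖ < 1 := by
  intro t ht X Y hXY
  -- S is symmetric
  have hnegS : ∀ s : Matrix (Fin n) (Fin n) F, s ∈ S → -s ∈ S := by
    intro s hs
    have := hstab (-1) 1 hdet Matrix.det_one s hs
    simpa using this
  have hSsymm : ∀ a b : Matrix (Fin n) (Fin n) F, (b - a ∈ S ↔ a - b ∈ S) := by
    intro a b
    constructor
    · intro h; simpa using hnegS _ h
    · intro h; simpa using hnegS _ h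
  -- A is Hermitian
  have hAH : Aᴴ = A := by
    ext a b
    rw [Matrix.conjTranspose_apply, hA]
    simp only [Matrix.of_apply]
    rw [apply_ite (star : ℂ → ℂ), star_one, star_zero]
    exact if_congr (hSsymm a b) rfl rfl
  set M₀ : Matrix (Matrix (Fin n) (Fin n) F) (Matrix (Fin n) (Fin n) F) ℂ :=
    (Complex.I * (t : ℂ)) • A with hM₀
  have hM₀H : M₀ᴴ = -M₀ := by
    rw [hM₀, Matrix.conjTranspose_smul, hAH, ← neg_smul]
    congr 1
    simp [Complex.ext_iff]
  set E := NormedSpace.exp M₀ with hE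
  -- unitarity : E * Eᴴ = 1
  have hcomm : Commute M₀ M₀ᴴ := by rw [hM₀H]; exact (Commute.refl M₀).neg_right
  have hunit : E * Eᴴ = 1 := by
    rw [hE, ← Matrix.exp_conjTranspose, ← Matrix.exp_add_of_commute M₀ M₀ᴴ hcomm,
      hM₀H, add_neg_cancel, NormedSpace.exp_zero]
  -- row norm 1
  have hrow : ∑ Z : Matrix (Fin n) (Fin n) F, Complex.normSq (E X Z) = 1 := by
    have h1 : (E * Eᴴ) X X = 1 := by rw [hunit, Matrix.one_apply_eq]
    rw [Matrix.mul_apply] at h1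
    have h2 : ∑ Z : Matrix (Fin n) (Fin n) F, (Complex.normSq (E X Z) : ℂ) = 1 := by
      rw [← h1]
      refine Finset.sum_congr rfl fun Z _ => ?_
      rw [Matrix.conjTranspose_apply, ← Complex.mul_conj]
      rfl
    exact_mod_cast h2
  -- the automorphism
  obtain ⟨u, hu, huM⟩ := exists_transvection_move hn (Y - X) (sub_ne_zero.mpr (Ne.symm hXY))
  have hudet : IsUnit u.det := by rw [hu]; exact isUnit_one
  have huinv : u⁻¹ * u = 1 := Matrix.nonsing_inv_mul u hudet
  have huinv' : u * u⁻¹ = 1 := Matrix.mul_nonsing_inv u hudet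
  have huinvdet : (u⁻¹).det = 1 := by
    rw [Matrix.det_nonsing_inv, hu, Ring.inverse_one]
  have hSu : ∀ s : Matrix (Fin n) (Fin n) F, (u * s ∈ S ↔ s ∈ S) := by
    intro s
    constructor
    · intro h
      have := hstab u⁻¹ 1 huinvdet Matrix.det_one _ h
      simpa [mul_one, ← mul_assoc, huinv] using this
    · intro h
      have := hstab u 1 hu Matrix.det_one _ h
      simpa using this
  let σ : Matrix (Fin n) (Fin n) F ≃ Matrix (Fin n) (Fin n) F :=
    { toFun := fun Z => u * (Z - X) + X
      invFun := fun Z => u⁻¹ * (Z - X) + X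
      left_inv := by
        intro Z
        simp [← mul_assoc, huinv]
      right_inv := by
        intro Z
        simp [← mul_assoc, huinv'] }
  have hσdef : ∀ Z, σ Z = u * (Z - X) + X := fun Z => rfl
  have hAinv : ∀ a b : Matrix (Fin n) (Fin n) F, A (σ a) (σ b) = A a b := by
    intro a b
    have hsub : σ a - σ b = u * (a - b) := by
      rw [hσdef, hσdef, add_sub_add_right_eq_sub, ← mul_sub]
      congr 1
      abel
    rw [hA]
    simp only [Matrix.of_apply, hsub]
    exact if_congr (hSu _) rfl rfl
  have hMinv : Matrix.reindexAlgEquiv ℂ ℂ σ.symm M₀ = M₀ := by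
    ext a b
    rw [Matrix.reindexAlgEquiv_apply, Matrix.reindex_apply, Matrix.submatrix_apply]
    simp only [Equiv.symm_symm, hM₀, Matrix.smul_apply, hAinv]
  have hEinv : ∀ a b : Matrix (Fin n) (Fin n) F, E (σ a) (σ b) = E a b := by
    intro a b
    have key : Matrix.reindexAlgEquiv ℂ ℂ σ.symm E = E := by
      rw [hE, exp_reindex_aux, hMinv]
    calc E (σ a) (σ b) = (Matrix.reindexAlgEquiv ℂ ℂ σ.symm E) a b := by
          rw [Matrix.reindexAlgEquiv_apply, Matrix.reindex_apply, Matrix.submatrix_apply]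
          simp
      _ = E a b := by rw [key]
  have hσX : σ X = X := by rw [hσdef]; simp
  have hYY' : σ Y ≠ Y := by
    intro h
    apply huM
    have h1 : u * (Y - X) + X = Y := by rw [← hσdef, h]
    have h2 := congrArg (fun Z => Z - X) h1
    simpa using h2
  have hEeq : E X (σ Y) = E X Y := by
    conv_lhs => rw [← hσX]
    exact hEinv X Y
  -- sum bound
  have hle : Complex.normSq (E X Y) + Complex.normSq (E X (σ Y)) ≤ 1 := by
    rw [← hrow]
    have hsub : ∑ Z ∈ ({Y, σ Y} : Finset (Matrix (Fin n) (Fin n) F)),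
        Complex.normSq (E X Z) ≤
        ∑ Z : Matrix (Fin n) (Fin n) F, Complex.normSq (E X Z) := by
      apply Finset.sum_le_sum_of_subset_of_nonneg (Finset.subset_univ _)
      intro Z _ _
      exact Complex.normSq_nonneg _
    rwa [Finset.sum_pair (Ne.symm hYY')] at hsub
  rw [hEeq] at hle
  have hsq : Complex.normSq (E X Y) ≤ 1 / 2 := by linarith
  have habs : ‖E X Y‖ ^ 2 = Complex.normSq (E X Y) := Complex.sq_norm _
  have hnn : 0 ≤ ‖E X Y‖ := norm_nonneg _
  nlinarith
end
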